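/- If G′ is a connected subgraph of a connected directed graph G (obtained from G by deleting some edges and vertices), then π(G) ≥ π(G′). -/

import Mathlib

open scoped Classical

namespace Money

/-- A finite simple directed graph without loops, on a subset of `Fin n`. -/
structure Digraph (n : ℕ) where
  verts : Finset (Fin n)
  edges : Finset (Fin n × Fin n)
  mem_verts : ∀ e ∈ edges, e.1 ∈ verts ∧ e.2 ∈ verts
  no_loops : ∀ e ∈ edges, e.1 ≠ e.2

namespace Digraph

variable {n : ℕ}

/-- There is a directed path (possibly empty) from `i` to `j`. -/
def Reaches (G : Digraph n) : Fin n → Fin n → Prop :=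
  Relation.ReflTransGen fun a b => (a, b) ∈ G.edges

/-- `G` is connected: nonempty, and any vertex reaches any other by a directed path. -/
def Connected (G : Digraph n) : Prop :=
  G.verts.Nonempty ∧ ∀ i ∈ G.verts, ∀ j ∈ G.verts, G.Reaches i j

/-- `T` is (the edge set of) a spanning `i`-tree of `G`: every vertex `j ≠ i`
has a unique directed path in `T` to `i`. -/
def IsSpanTree (G : Digraph n) (i : Fin n) (T : Finset (Fin n × Fin n)) : Prop :=
  T ⊆ G.edges ∧
  (∀ j ∈ G.verts, j ≠ i → ∃! k, (j, k) ∈ T) ∧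
  (∀ k, (i, k) ∉ T) ∧
  ∀ j ∈ G.verts, Relation.ReflTransGen (fun a b => (a, b) ∈ T) j i

/-- The spanning-tree price of vertex `i` at edge weights `b`. -/
noncomputable def price (G : Digraph n) (i : Fin n) (b : Fin n × Fin n → ℝ) : ℝ :=
  ∑ T ∈ G.edges.powerset.filter (fun T => G.IsSpanTree i T), ∏ e ∈ T, b e

/-- The price-ratio function `b ↦ p_i(b)/p_j(b)`. -/
noncomputable def priceRatio (G : Digraph n) (i j : Fin n) (b : Fin n × Fin n → ℝ) : ℝ :=
  G.price i b / G.price j b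

/-- An edge coordinate `e` is influential for `f` (as a function on positive
weight vectors on the edges of `G`). -/
def Influential (G : Digraph n) (f : (Fin n × Fin n → ℝ) → ℝ) (e : Fin n × Fin n) : Prop :=
  ∃ b b' : Fin n × Fin n → ℝ,
    (∀ e' ∈ G.edges, 0 < b e') ∧ (∀ e' ∈ G.edges, 0 < b' e') ∧
    (∀ e', e' ≠ e → b e' = b' e') ∧ f b ≠ f b'

/-- `π_ij(G)`: the number of influential edges of the price-ratio `p_i/p_j`. -/
noncomputable def priceCplxPair (G : Digraph n) (i j : Fin n) : ℕ :=
  (G.edges.filter (fun e => G.Influential (G.priceRatio i j) e)).card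

/-- The price complexity `π(G) = max_{i ≠ j} π_ij(G)`. -/
noncomputable def priceComplexity (G : Digraph n) : ℕ :=
  ((G.verts ×ˢ G.verts).filter fun p => p.1 ≠ p.2).sup fun p => G.priceCplxPair p.1 p.2

/-- There is a directed walk of length `k` from `i` to `j`. -/
def HasWalk (G : Digraph n) (i j : Fin n) (k : ℕ) : Prop :=
  ∃ g : ℕ → Fin n, g 0 = i ∧ g k = j ∧ ∀ t < k, (g t, g (t + 1)) ∈ G.edges

/-- Length of a shortest directed path from `i` to `j`. -/
noncomputable def dist (G : Digraph n) (i j : Fin n) : ℕ := sInf {k | G.HasWalk i j k}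

/-- The time complexity `τ(G)`: the diameter of `G`. -/
noncomputable def timeComplexity (G : Digraph n) : ℕ :=
  ((G.verts ×ˢ G.verts).filter fun p => p.1 ≠ p.2).sup fun p => G.dist p.1 p.2

def outdeg (G : Digraph n) (v : Fin n) : ℕ := (G.edges.filter fun e => e.1 = v).card

def indeg (G : Digraph n) (v : Fin n) : ℕ := (G.edges.filter fun e => e.2 = v).card

/-- A directed cycle: connected, and every vertex has exactly one outgoing
and one incoming edge. -/
def IsCycleGraph (G : Digraph n) : Prop :=
  G.Connected ∧ ∀ v ∈ G.verts, G.outdeg v = 1 ∧ G.indeg v = 1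

/-- `P` is a (simple) directed path from `s` to `t`, `s ≠ t`. -/
def IsPathGraph (P : Digraph n) (s t : Fin n) : Prop :=
  s ≠ t ∧ s ∈ P.verts ∧ t ∈ P.verts ∧
  (∀ v ∈ P.verts, P.Reaches s v ∧ P.Reaches v t) ∧
  (∀ v ∈ P.verts, v ≠ t → P.outdeg v = 1) ∧ P.outdeg t = 0 ∧
  (∀ v ∈ P.verts, v ≠ s → P.indeg v = 1) ∧ P.indeg s = 0

/-- Union of two digraphs. -/
def union (G H : Digraph n) : Digraph n where
  verts := G.verts ∪ H.verts
  edges := G.edges ∪ H.edges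
  mem_verts := by
    intro e he
    rcases Finset.mem_union.mp he with h | h
    · exact ⟨Finset.mem_union_left _ (G.mem_verts e h).1,
        Finset.mem_union_left _ (G.mem_verts e h).2⟩
    · exact ⟨Finset.mem_union_right _ (H.mem_verts e h).1,
        Finset.mem_union_right _ (H.mem_verts e h).2⟩
  no_loops := by
    intro e he
    rcases Finset.mem_union.mp he with h | h
    · exact G.no_loops e h
    · exact H.no_loops e h

/-- A chorded cycle: a directed cycle `C` together with a directed path `P`
joining two distinct vertices of `C`, otherwise disjoint from `C`. -/
def IsChordedCycle (G : Digraph n) : Prop :=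
  ∃ (C P : Digraph n) (s t : Fin n),
    C.IsCycleGraph ∧ P.IsPathGraph s t ∧ s ∈ C.verts ∧ t ∈ C.verts ∧
    P.verts ∩ C.verts = {s, t} ∧ Disjoint C.edges P.edges ∧ G = C.union P

/-- A `k`-rose: `k` directed cycles sharing a single common vertex, otherwise
pairwise disjoint.  A `0`-rose is a single vertex. -/
def IsRose (G : Digraph n) (k : ℕ) : Prop :=
  ∃ (j : Fin n) (C : Fin k → Digraph n),
    (∀ i, (C i).IsCycleGraph) ∧ (∀ i, j ∈ (C i).verts) ∧
    (∀ i i', i ≠ i' → (C i).verts ∩ (C i').verts = {j}) ∧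
    G.verts = insert j (Finset.univ.biUnion fun i => (C i).verts) ∧
    G.edges = Finset.univ.biUnion fun i => (C i).edges

/-- `H` is a subgraph of `G` (obtained by deleting some edges and vertices). -/
def IsSubgraph (H G : Digraph n) : Prop := H.verts ⊆ G.verts ∧ H.edges ⊆ G.edges

/-- The circuit rank `c(G) = e(G) - v(G) + 1`. -/
def circuitRank (G : Digraph n) : ℤ := (G.edges.card : ℤ) - (G.verts.card : ℤ) + 1

/-- The edge `ij` is collapsible. -/
def Collapsible (G : Digraph n) (i j : Fin n) : Prop :=
  (i, j) ∈ G.edges ∧ G.outdeg i = 1 ∧ (j, i) ∉ G.edges ∧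
  ∀ k, ¬((k, i) ∈ G.edges ∧ (k, j) ∈ G.edges)

/-- `G` is rigid: no collapsible edges. -/
def Rigid (G : Digraph n) : Prop := ∀ i j, ¬G.Collapsible i j

/-- `k` covers the ordinary vertex `i` (whose unique outgoing edge is `ij`). -/
def Covers (G : Digraph n) (k i : Fin n) : Prop :=
  G.outdeg i = 1 ∧ ∃ j, (i, j) ∈ G.edges ∧
    (((k, i) ∈ G.edges ∧ (k, j) ∈ G.edges) ∨ (k = j ∧ (j, i) ∈ G.edges))

/-- A star on all of `Fin n`: a center joined to every other vertex by a pair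
of oppositely directed edges, and no other edges. -/
def IsStar (G : Digraph n) : Prop :=
  ∃ c : Fin n, G.verts = Finset.univ ∧
    G.edges = Finset.univ.filter fun e => (e.1 = c ∧ e.2 ≠ c) ∨ (e.2 = c ∧ e.1 ≠ c)

/-- The complete directed graph on all of `Fin n`. -/
def IsComplete (G : Digraph n) : Prop :=
  G.verts = Finset.univ ∧ G.edges = Finset.univ.filter fun e => e.1 ≠ e.2

/-- A chorded triangle: a 3-cycle `u → v → w → u` together with the
bidirected pair between `u` and `w`. -/
def IsChordedTriangle (T : Digraph n) : Prop :=
  ∃ u v w : Fin n, u ≠ v ∧ v ≠ w ∧ u ≠ w ∧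
    T.verts = {u, v, w} ∧ T.edges = {(u, w), (w, u), (u, v), (v, w)}

end Digraph

end Money

open Money Money.Digraph

section Aux

variable {n : ℕ}

/-- Crossing lemma: a path from outside `S` to inside `S` has a crossing edge. -/
lemma exists_crossing {E : Finset (Fin n × Fin n)} {S : Finset (Fin n)} {v i : Fin n}
    (h : Relation.ReflTransGen (fun a b => (a, b) ∈ E) v i) (hi : i ∈ S) :
    v ∉ S → ∃ u w, u ∉ S ∧ w ∈ S ∧ (u, w) ∈ E := by
  induction h using Relation.ReflTransGen.head_induction_on with
  | refl => intro hv; exact absurd hi hv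
  | head h' _ ih =>
    intro hv
    rename_i a c _
    by_cases hcS : c ∈ S
    · exact ⟨a, c, hv, hcS, h'⟩
    · exact ih hcS

lemma build_spanTree {G : Money.Digraph n} (hc : G.Connected) {i : Fin n} (hi : i ∈ G.verts) :
    ∀ (k : ℕ) (S : Finset (Fin n)) (T : Finset (Fin n × Fin n)),
      (G.verts \ S).card = k → S ⊆ G.verts → i ∈ S → T ⊆ G.edges →
      (∀ e ∈ T, e.1 ∈ S ∧ e.1 ≠ i ∧ e.2 ∈ S) →
      (∀ j ∈ S, j ≠ i → ∃! m, (j, m) ∈ T) →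
      (∀ j ∈ S, Relation.ReflTransGen (fun a b => (a, b) ∈ T) j i) →
      ∃ T', G.IsSpanTree i T' := by
  intro k
  induction k with
  | zero =>
    intro S T hcard hS hiS hTE hTsrc huniq hreach
    have hSv : S = G.verts := by
      have : G.verts \ S = ∅ := Finset.card_eq_zero.mp hcard
      have h2 : G.verts ⊆ S := Finset.sdiff_eq_empty_iff_subset.mp this
      exact Finset.Subset.antisymm hS h2
    refine ⟨T, hTE, ?_, ?_, ?_⟩
    · intro j hj hji; exact huniq j (hSv ▸ hj) hji
    · intro m hm; exact (hTsrc _ hm).2.1 rfl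
    · intro j hj; exact hreach j (hSv ▸ hj)
  | succ k ih =>
    intro S T hcard hS hiS hTE hTsrc huniq hreach
    have hne : (G.verts \ S).Nonempty := Finset.card_pos.mp (by omega)
    obtain ⟨v, hv⟩ := hne
    obtain ⟨hvG, hvS⟩ := Finset.mem_sdiff.mp hv
    obtain ⟨u, w, hu, hw, huw⟩ := exists_crossing (hc.2 v hvG i hi) hiS hvS
    have huG : u ∈ G.verts := (G.mem_verts _ huw).1
    apply ih (insert u S) (insert (u, w) T)
    · rw [Finset.sdiff_insert, Finset.card_erase_of_mem (Finset.mem_sdiff.mpr ⟨huG, hu⟩), hcard]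
      omega
    · exact Finset.insert_subset huG hS
    · exact Finset.mem_insert_of_mem hiS
    · exact Finset.insert_subset huw hTE
    · intro e he
      rcases Finset.mem_insert.mp he with rfl | he
      · exact ⟨Finset.mem_insert_self _ _, fun h => hu (by rw [show (u,w).1 = u from rfl] at h; rw [h]; exact hiS), Finset.mem_insert_of_mem hw⟩
      · exact ⟨Finset.mem_insert_of_mem (hTsrc e he).1, (hTsrc e he).2.1,
          Finset.mem_insert_of_mem (hTsrc e he).2.2⟩
    · intro j hj hji
      rcases Finset.mem_insert.mp hj with rfl | hjS
      · refine ⟨w, Finset.mem_insert_self _ _, ?_⟩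
        intro m hm
        rcases Finset.mem_insert.mp hm with h | h
        · exact (Prod.mk.injEq _ _ _ _ ▸ h).2
        · exact absurd ((hTsrc _ h).1) hu
      · obtain ⟨m, hm, hmu⟩ := huniq j hjS hji
        refine ⟨m, Finset.mem_insert_of_mem hm, ?_⟩
        intro m' hm'
        rcases Finset.mem_insert.mp hm' with h | h
        · exact absurd (((Prod.mk.injEq _ _ _ _).mp h).1 ▸ hjS) hu
        · exact hmu m' h
    · intro j hj
      rcases Finset.mem_insert.mp hj with rfl | hjS
      · refine Relation.ReflTransGen.head (Finset.mem_insert_self _ _) ?_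
        exact Relation.ReflTransGen.mono (fun a b h => Finset.mem_insert_of_mem h) _ _ (hreach w hw)
      · exact Relation.ReflTransGen.mono (fun a b h => Finset.mem_insert_of_mem h) _ _ (hreach j hjS)

lemma exists_spanTree {G : Money.Digraph n} (hc : G.Connected) {i : Fin n}
    (hi : i ∈ G.verts) : ∃ T, G.IsSpanTree i T := by
  apply build_spanTree hc hi (G.verts \ {i}).card {i} ∅ rfl
    (Finset.singleton_subset_iff.mpr hi) (Finset.mem_singleton_self i)
    (Finset.empty_subset _)
  · intro e he; exact absurd he (Finset.notMem_empty e)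
  · intro j hj hji; exact absurd (Finset.mem_singleton.mp hj) hji
  · intro j hj; rw [Finset.mem_singleton.mp hj]

/-- The extra-vertex forests used to extend spanning trees of `G'` to `G`. -/
def IsForestF (G G' : Money.Digraph n) (F : Finset (Fin n × Fin n)) : Prop :=
  F ⊆ G.edges ∧ (∀ e ∈ F, e.1 ∈ G.verts \ G'.verts) ∧
  (∀ v ∈ G.verts \ G'.verts, ∃! k, (v, k) ∈ F) ∧
  ∀ v ∈ G.verts \ G'.verts, ∃ u ∈ G'.verts,
    Relation.ReflTransGen (fun a b => (a, b) ∈ F) v u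

lemma forest_card {G G' : Money.Digraph n} {F : Finset (Fin n × Fin n)}
    (hF : IsForestF G G' F) : F.card = (G.verts \ G'.verts).card := by
  apply Finset.card_bij (fun e _ => e.1)
  · exact hF.2.1
  · intro e1 h1 e2 h2 h
    obtain ⟨k, hk, hku⟩ := hF.2.2.1 e1.1 (hF.2.1 e1 h1)
    have h1' : (e1.1, e1.2) ∈ F := h1
    have h2' : (e1.1, e2.2) ∈ F := by rw [h]; exact h2
    exact Prod.ext h (by rw [hku e1.2 h1', hku e2.2 h2'])
  · intro v hv
    obtain ⟨k, hk, -⟩ := hF.2.2.1 v hv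
    exact ⟨(v, k), hk, rfl⟩

/-- Any path ending in `G'.verts` escapes from the extra vertices using only
edges with extra sources. -/
lemma reach_escape {G' : Money.Digraph n} {T : Finset (Fin n × Fin n)} {v u : Fin n}
    (h : Relation.ReflTransGen (fun a b => (a, b) ∈ T) v u) (hu : u ∈ G'.verts) :
    ∃ w ∈ G'.verts, Relation.ReflTransGen
      (fun a b => (a, b) ∈ T.filter (fun e => e.1 ∉ G'.verts)) v w := by
  induction h using Relation.ReflTransGen.head_induction_on with
  | refl => exact ⟨u, hu, Relation.ReflTransGen.refl⟩
  | head h' _ ih =>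
    rename_i a c _
    by_cases haG : a ∈ G'.verts
    · exact ⟨a, haG, Relation.ReflTransGen.refl⟩
    · obtain ⟨w, hwG, hpath⟩ := ih
      exact ⟨w, hwG, Relation.ReflTransGen.head
        (Finset.mem_filter.mpr ⟨h', haG⟩) hpath⟩

/-- If every tree edge with source in `G'.verts` is a `G'` edge, then paths
from `G'` vertices stay inside `G'` edges. -/
lemma reach_in_sub {G' : Money.Digraph n} {T : Finset (Fin n × Fin n)} {j i : Fin n}
    (hP : ∀ e ∈ T, e.1 ∈ G'.verts → e ∈ G'.edges)
    (h : Relation.ReflTransGen (fun a b => (a, b) ∈ T) j i) :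
    j ∈ G'.verts → Relation.ReflTransGen
      (fun a b => (a, b) ∈ T.filter (fun e => e ∈ G'.edges)) j i := by
  induction h using Relation.ReflTransGen.head_induction_on with
  | refl => intro _; exact Relation.ReflTransGen.refl
  | head h' _ ih =>
    rename_i a c _
    intro haG
    have hE : (a, c) ∈ G'.edges := hP _ h' haG
    have hcG : c ∈ G'.verts := (G'.mem_verts _ hE).2
    exact Relation.ReflTransGen.head (Finset.mem_filter.mpr ⟨h', hE⟩) (ih hcG)

/-- Every spanning tree has at least one non-`G'` edge per extra vertex. -/
lemma extra_le_filter {G G' : Money.Digraph n} {i : Fin n} {T : Finset (Fin n × Fin n)}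
    (hi : i ∈ G'.verts) (hT : G.IsSpanTree i T) :
    (G.verts \ G'.verts).card ≤ (T.filter (fun e => e.1 ∉ G'.verts)).card := by
  classical
  have hout : ∀ v ∈ G.verts \ G'.verts, ∃ k, (v, k) ∈ T := by
    intro v hv
    obtain ⟨hvG, hvG'⟩ := Finset.mem_sdiff.mp hv
    obtain ⟨k, hk, -⟩ := hT.2.1 v hvG (fun h => hvG' (h ▸ hi))
    exact ⟨k, hk⟩
  apply Finset.card_le_card_of_injOn
    (fun v => if h : ∃ k, (v, k) ∈ T then (v, h.choose) else (v, v))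
  · intro v hv
    beta_reduce
    rw [dif_pos (hout v hv)]
    exact Finset.mem_filter.mpr ⟨(hout v hv).choose_spec, (Finset.mem_sdiff.mp hv).2⟩
  · intro v1 h1 v2 h2 heq
    simp only [dif_pos (hout v1 (Finset.mem_coe.mp h1)),
      dif_pos (hout v2 (Finset.mem_coe.mp h2)), Prod.mk.injEq] at heq
    exact heq.1

lemma filter_subset_sdiff {G' : Money.Digraph n} (T : Finset (Fin n × Fin n)) :
    T.filter (fun e => e.1 ∉ G'.verts) ⊆ T \ G'.edges := by
  intro e he
  obtain ⟨heT, hes⟩ := Finset.mem_filter.mp he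
  exact Finset.mem_sdiff.mpr ⟨heT, fun h => hes (G'.mem_verts e h).1⟩

lemma tree_lower_bound {G G' : Money.Digraph n} {i : Fin n} {T : Finset (Fin n × Fin n)}
    (hi : i ∈ G'.verts) (hT : G.IsSpanTree i T) :
    (G.verts \ G'.verts).card ≤ (T \ G'.edges).card :=
  (extra_le_filter hi hT).trans (Finset.card_le_card (filter_subset_sdiff T))

lemma minimal_struct {G G' : Money.Digraph n} {i : Fin n} {T : Finset (Fin n × Fin n)}
    (hi : i ∈ G'.verts) (hT : G.IsSpanTree i T)
    (hcard : (T \ G'.edges).card = (G.verts \ G'.verts).card) :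
    T \ G'.edges = T.filter (fun e => e.1 ∉ G'.verts) ∧
    ∀ e ∈ T, e.1 ∈ G'.verts → e ∈ G'.edges := by
  have h1 : T \ G'.edges = T.filter (fun e => e.1 ∉ G'.verts) := by
    refine (Finset.eq_of_subset_of_card_le (filter_subset_sdiff T) ?_).symm
    rw [hcard]; exact extra_le_filter hi hT
  refine ⟨h1, ?_⟩
  intro e heT heG'
  by_contra hne
  have : e ∈ T \ G'.edges := Finset.mem_sdiff.mpr ⟨heT, hne⟩
  rw [h1] at this
  exact (Finset.mem_filter.mp this).2 heG'

lemma split_spanTree {G G' : Money.Digraph n} {i : Fin n} {T : Finset (Fin n × Fin n)}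
    (hsub : G'.IsSubgraph G) (hi : i ∈ G'.verts) (hT : G.IsSpanTree i T)
    (hcard : (T \ G'.edges).card = (G.verts \ G'.verts).card) :
    G'.IsSpanTree i (T.filter (fun e => e ∈ G'.edges)) ∧ IsForestF G G' (T \ G'.edges) := by
  obtain ⟨hsd, hP⟩ := minimal_struct hi hT hcard
  constructor
  · refine ⟨fun e he => (Finset.mem_filter.mp he).2, ?_, ?_, ?_⟩
    · intro j hj hji
      obtain ⟨k, hk, hku⟩ := hT.2.1 j (hsub.1 hj) hji
      refine ⟨k, Finset.mem_filter.mpr ⟨hk, hP _ hk hj⟩, ?_⟩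
      intro m hm
      exact hku m (Finset.mem_filter.mp hm).1
    · intro k hk
      exact hT.2.2.1 k (Finset.mem_filter.mp hk).1
    · intro j hj
      exact reach_in_sub hP (hT.2.2.2 j (hsub.1 hj)) hj
  · refine ⟨fun e he => hT.1 (Finset.mem_sdiff.mp he).1, ?_, ?_, ?_⟩
    · intro e he
      rw [hsd] at he
      obtain ⟨heT, hes⟩ := Finset.mem_filter.mp he
      exact Finset.mem_sdiff.mpr ⟨(G.mem_verts e (hT.1 heT)).1, hes⟩
    · intro v hv
      obtain ⟨hvG, hvG'⟩ := Finset.mem_sdiff.mp hv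
      obtain ⟨k, hk, hku⟩ := hT.2.1 v hvG (fun h => hvG' (h ▸ hi))
      refine ⟨k, ?_, fun m hm => hku m (Finset.mem_sdiff.mp hm).1⟩
      exact Finset.mem_sdiff.mpr ⟨hk, fun h => hvG' (G'.mem_verts _ h).1⟩
    · intro v hv
      obtain ⟨hvG, hvG'⟩ := Finset.mem_sdiff.mp hv
      obtain ⟨w, hwG', hpath⟩ := reach_escape (hT.2.2.2 v hvG) hi
      exact ⟨w, hwG', hsd ▸ hpath⟩

lemma glue_spanTree {G G' : Money.Digraph n} {i : Fin n} {T' F : Finset (Fin n × Fin n)}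
    (hsub : G'.IsSubgraph G) (hi : i ∈ G'.verts) (hT' : G'.IsSpanTree i T')
    (hF : IsForestF G G' F) :
    G.IsSpanTree i (T' ∪ F) ∧ (T' ∪ F).filter (fun e => e ∈ G'.edges) = T' ∧
      (T' ∪ F) \ G'.edges = F := by
  have hFnot : ∀ e ∈ F, e ∉ G'.edges := by
    intro e he h
    exact (Finset.mem_sdiff.mp (hF.2.1 e he)).2 (G'.mem_verts e h).1
  have hT'src : ∀ e ∈ T', e.1 ∈ G'.verts := fun e he => (G'.mem_verts e (hT'.1 he)).1
  refine ⟨⟨?_, ?_, ?_, ?_⟩, ?_, ?_⟩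
  · exact Finset.union_subset (hT'.1.trans hsub.2) hF.1
  · intro j hj hji
    by_cases hjG' : j ∈ G'.verts
    · obtain ⟨k, hk, hku⟩ := hT'.2.1 j hjG' hji
      refine ⟨k, Finset.mem_union_left _ hk, ?_⟩
      intro m hm
      rcases Finset.mem_union.mp hm with h | h
      · exact hku m h
      · exact absurd (Finset.mem_sdiff.mp (hF.2.1 _ h)).2 (fun hh => hh hjG')
    · have hjx : j ∈ G.verts \ G'.verts := Finset.mem_sdiff.mpr ⟨hj, hjG'⟩
      obtain ⟨k, hk, hku⟩ := hF.2.2.1 j hjx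
      refine ⟨k, Finset.mem_union_right _ hk, ?_⟩
      intro m hm
      rcases Finset.mem_union.mp hm with h | h
      · exact absurd (hT'src _ h) hjG'
      · exact hku m h
  · intro k hk
    rcases Finset.mem_union.mp hk with h | h
    · exact hT'.2.2.1 k h
    · exact (Finset.mem_sdiff.mp (hF.2.1 _ h)).2 hi
  · intro j hj
    have hG'reach : ∀ u ∈ G'.verts,
        Relation.ReflTransGen (fun a b => (a, b) ∈ T' ∪ F) u i := by
      intro u hu
      exact Relation.ReflTransGen.mono (fun a b h => Finset.mem_union_left _ h) _ _ (hT'.2.2.2 u hu)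
    by_cases hjG' : j ∈ G'.verts
    · exact hG'reach j hjG'
    · obtain ⟨u, hu, hpath⟩ := hF.2.2.2 j (Finset.mem_sdiff.mpr ⟨hj, hjG'⟩)
      exact Relation.ReflTransGen.trans
        (Relation.ReflTransGen.mono (fun a b h => Finset.mem_union_right _ h) _ _ hpath) (hG'reach u hu)
  · ext e
    simp only [Finset.mem_filter, Finset.mem_union]
    constructor
    · rintro ⟨h | h, hG'⟩
      · exact h
      · exact absurd hG' (hFnot e h)
    · intro h
      exact ⟨Or.inl h, hT'.1 h⟩
  · ext e
    simp only [Finset.mem_sdiff, Finset.mem_union]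
    constructor
    · rintro ⟨h | h, hG'⟩
      · exact absurd (hT'.1 h) hG'
      · exact h
    · intro h
      exact ⟨Or.inr h, hFnot e h⟩

lemma price_pos {G' : Money.Digraph n} (hc' : G'.Connected) {i : Fin n} (hi : i ∈ G'.verts)
    {b : Fin n × Fin n → ℝ} (hb : ∀ e ∈ G'.edges, 0 < b e) : 0 < G'.price i b := by
  apply Finset.sum_pos
  · intro T hT
    apply Finset.prod_pos
    intro e he
    exact hb e ((Finset.mem_powerset.mp (Finset.mem_filter.mp hT).1) he)
  · obtain ⟨T, hT⟩ := exists_spanTree hc' hi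
    exact ⟨T, Finset.mem_filter.mpr ⟨Finset.mem_powerset.mpr hT.1, hT⟩⟩

lemma forests_card_pos {G G' : Money.Digraph n} (hsub : G'.IsSubgraph G)
    (hc : G.Connected) (hc' : G'.Connected) :
    0 < (G.edges.powerset.filter (fun F => IsForestF G G' F)).card := by
  rw [Finset.card_pos]
  obtain ⟨i, hi⟩ := hc'.1
  obtain ⟨T, hT⟩ := exists_spanTree hc (hsub.1 hi)
  refine ⟨T.filter (fun e => e.1 ∉ G'.verts), Finset.mem_filter.mpr
    ⟨Finset.mem_powerset.mpr ((Finset.filter_subset _ _).trans hT.1), ?_, ?_, ?_, ?_⟩⟩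
  · exact (Finset.filter_subset _ _).trans hT.1
  · intro e he
    obtain ⟨heT, hes⟩ := Finset.mem_filter.mp he
    exact Finset.mem_sdiff.mpr ⟨(G.mem_verts e (hT.1 heT)).1, hes⟩
  · intro v hv
    obtain ⟨hvG, hvG'⟩ := Finset.mem_sdiff.mp hv
    obtain ⟨k, hk, hku⟩ := hT.2.1 v hvG (fun h => hvG' (h ▸ hi))
    exact ⟨k, Finset.mem_filter.mpr ⟨hk, hvG'⟩, fun m hm => hku m (Finset.mem_filter.mp hm).1⟩
  · intro v hv
    obtain ⟨hvG, hvG'⟩ := Finset.mem_sdiff.mp hv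
    exact reach_escape (hT.2.2.2 v hvG) hi

/-- Key decomposition: with weight `ε` on non-`G'` edges, the price of `i` in `G`
factors as `ε ^ m` times a continuous function whose value at `0` is the number of
extra-forests times the price of `i` in `G'`. -/
lemma price_key {G G' : Money.Digraph n} (hsub : G'.IsSubgraph G) {i : Fin n}
    (hi : i ∈ G'.verts) (b : Fin n × Fin n → ℝ) :
    ∃ r : ℝ → ℝ, Continuous r ∧
      (∀ ε : ℝ, G.price i (fun e => if e ∈ G'.edges then b e else ε)
        = ε ^ (G.verts \ G'.verts).card * r ε) ∧
      r 0 = ((G.edges.powerset.filter (fun F => IsForestF G G' F)).card : ℝ)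
        * G'.price i b := by
  classical
  set m := (G.verts \ G'.verts).card with hm
  set trees := G.edges.powerset.filter (fun T => G.IsSpanTree i T) with htrees
  set trees' := G'.edges.powerset.filter (fun T => G'.IsSpanTree i T) with htrees'
  set forests := G.edges.powerset.filter (fun F => IsForestF G G' F) with hforests
  refine ⟨fun ε => ∑ T ∈ trees, (∏ e ∈ T.filter (fun e => e ∈ G'.edges), b e)
      * ε ^ ((T \ G'.edges).card - m), ?_, ?_, ?_⟩
  · exact continuous_finset_sum _ fun T _ => continuous_const.mul (continuous_pow _)
  · intro ε
    rw [Money.Digraph.price, Finset.mul_sum]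
    apply Finset.sum_congr rfl
    intro T hT
    have hTtree : G.IsSpanTree i T := (Finset.mem_filter.mp hT).2
    have hmk : m ≤ (T \ G'.edges).card := tree_lower_bound hi hTtree
    have h1 : ∏ e ∈ T, (if e ∈ G'.edges then b e else ε)
        = (∏ e ∈ T.filter (fun e => e ∈ G'.edges), b e) * ε ^ (T \ G'.edges).card := by
      rw [← Finset.prod_filter_mul_prod_filter_not T (fun e => e ∈ G'.edges)]
      congr 1
      · exact Finset.prod_congr rfl fun e he => if_pos (Finset.mem_filter.mp he).2
      · rw [Finset.prod_congr rfl (fun e (he : e ∈ T.filter _) =>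
          if_neg (Finset.mem_filter.mp he).2), Finset.prod_const]
        congr 1
        rw [Finset.sdiff_eq_filter]
    have h2 : ε ^ (T \ G'.edges).card = ε ^ m * ε ^ ((T \ G'.edges).card - m) := by
      rw [← pow_add, Nat.add_sub_cancel' hmk]
    rw [h1, h2]
    ring
  · beta_reduce
    have hz : ∀ T ∈ trees, (∏ e ∈ T.filter (fun e => e ∈ G'.edges), b e)
        * (0 : ℝ) ^ ((T \ G'.edges).card - m)
        = if (T \ G'.edges).card = m
            then ∏ e ∈ T.filter (fun e => e ∈ G'.edges), b e else 0 := by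
      intro T hT
      have hmk := tree_lower_bound hi (Finset.mem_filter.mp hT).2
      by_cases h : (T \ G'.edges).card = m
      · rw [if_pos h, h, Nat.sub_self, pow_zero, mul_one]
      · rw [if_neg h, zero_pow (by omega), mul_zero]
    rw [Finset.sum_congr rfl hz, ← Finset.sum_filter]
    have hbij : ∑ T ∈ trees.filter (fun T => (T \ G'.edges).card = m),
        ∏ e ∈ T.filter (fun e => e ∈ G'.edges), b e
        = ∑ p ∈ trees' ×ˢ forests, ∏ e ∈ p.1, b e := by
      apply Finset.sum_bij'
        (i := fun T _ => (T.filter (fun e => e ∈ G'.edges), T \ G'.edges))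
        (j := fun p _ => p.1 ∪ p.2)
      · intro T hT
        obtain ⟨hT1, hT2⟩ := Finset.mem_filter.mp hT
        have hTtree : G.IsSpanTree i T := (Finset.mem_filter.mp hT1).2
        obtain ⟨hsplit1, hsplit2⟩ := split_spanTree hsub hi hTtree hT2
        refine Finset.mem_product.mpr ⟨?_, ?_⟩
        · exact Finset.mem_filter.mpr ⟨Finset.mem_powerset.mpr hsplit1.1, hsplit1⟩
        · exact Finset.mem_filter.mpr ⟨Finset.mem_powerset.mpr hsplit2.1, hsplit2⟩
      · intro p hp
        obtain ⟨hp1, hp2⟩ := Finset.mem_product.mp hp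
        have hT' : G'.IsSpanTree i p.1 := (Finset.mem_filter.mp hp1).2
        have hF : IsForestF G G' p.2 := (Finset.mem_filter.mp hp2).2
        obtain ⟨hglue1, hglue2, hglue3⟩ := glue_spanTree hsub hi hT' hF
        refine Finset.mem_filter.mpr ⟨Finset.mem_filter.mpr
          ⟨Finset.mem_powerset.mpr hglue1.1, hglue1⟩, ?_⟩
        rw [hglue3]
        exact forest_card hF
      · intro T hT
        rw [Finset.sdiff_eq_filter, Finset.filter_union_filter_not_eq]
      · intro p hp
        obtain ⟨hp1, hp2⟩ := Finset.mem_product.mp hp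
        have hT' : G'.IsSpanTree i p.1 := (Finset.mem_filter.mp hp1).2
        have hF : IsForestF G G' p.2 := (Finset.mem_filter.mp hp2).2
        obtain ⟨hglue1, hglue2, hglue3⟩ := glue_spanTree hsub hi hT' hF
        exact Prod.ext hglue2 hglue3
      · intro T hT
        rfl
    rw [hbij, Finset.sum_product]
    simp only [Finset.sum_const, nsmul_eq_mul]
    rw [Money.Digraph.price, Finset.mul_sum]

lemma influential_mono {G G' : Money.Digraph n} (hc : G.Connected)
    (hc' : G'.Connected) (hsub : G'.IsSubgraph G) {i j : Fin n}
    (hi : i ∈ G'.verts) (hj : j ∈ G'.verts) {e : Fin n × Fin n} (he : e ∈ G'.edges)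
    (h : G'.Influential (G'.priceRatio i j) e) : G.Influential (G.priceRatio i j) e := by
  classical
  obtain ⟨b, b', hb, hb', hagree, hne⟩ := h
  by_contra hninf
  set N := (G.edges.powerset.filter (fun F => IsForestF G G' F)).card with hN
  have hNpos : 0 < N := forests_card_pos hsub hc hc'
  have hNne : (N : ℝ) ≠ 0 := Nat.cast_ne_zero.mpr hNpos.ne'
  obtain ⟨ri, hri_c, hri_eq, hri0⟩ := price_key hsub hi b
  obtain ⟨rj, hrj_c, hrj_eq, hrj0⟩ := price_key hsub hj b
  obtain ⟨ri', hri'_c, hri'_eq, hri'0⟩ := price_key hsub hi b'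
  obtain ⟨rj', hrj'_c, hrj'_eq, hrj'0⟩ := price_key hsub hj b'
  set B : ℝ → (Fin n × Fin n → ℝ) :=
    fun ε e' => if e' ∈ G'.edges then b e' else ε with hB
  set B' : ℝ → (Fin n × Fin n → ℝ) :=
    fun ε e' => if e' ∈ G'.edges then b' e' else ε with hB'
  have hpjb : 0 < G'.price j b := price_pos hc' hj hb
  have hpjb' : 0 < G'.price j b' := price_pos hc' hj hb'
  -- equal ratios for every positive ε, since e is not influential in G
  have heqr : ∀ ε : ℝ, 0 < ε →
      G.priceRatio i j (B ε) = G.priceRatio i j (B' ε) := by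
    intro ε hε
    by_contra hcon
    apply hninf
    refine ⟨B ε, B' ε, ?_, ?_, ?_, hcon⟩
    · intro e' _
      by_cases h' : e' ∈ G'.edges
      · simpa [hB, h'] using hb e' h'
      · simpa [hB, h'] using hε
    · intro e' _
      by_cases h' : e' ∈ G'.edges
      · simpa [hB', h'] using hb' e' h'
      · simpa [hB', h'] using hε
    · intro e' hne'
      by_cases h' : e' ∈ G'.edges
      · simp only [hB, hB', h', if_pos]
        exact hagree e' hne'
      · simp [hB, hB', h']
  have hratio : ∀ ε : ℝ, 0 < ε → G.priceRatio i j (B ε) = ri ε / rj ε := by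
    intro ε hε
    rw [Money.Digraph.priceRatio, hri_eq ε, hrj_eq ε,
      mul_div_mul_left _ _ (pow_ne_zero _ hε.ne')]
  have hratio' : ∀ ε : ℝ, 0 < ε → G.priceRatio i j (B' ε) = ri' ε / rj' ε := by
    intro ε hε
    rw [Money.Digraph.priceRatio, hri'_eq ε, hrj'_eq ε,
      mul_div_mul_left _ _ (pow_ne_zero _ hε.ne')]
  have hrj0ne : rj 0 ≠ 0 := by
    rw [hrj0]; exact (mul_pos (by exact_mod_cast hNpos) hpjb).ne'
  have hrj'0ne : rj' 0 ≠ 0 := by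
    rw [hrj'0]; exact (mul_pos (by exact_mod_cast hNpos) hpjb').ne'
  have ht1 : Filter.Tendsto (fun ε => G.priceRatio i j (B ε))
      (nhdsWithin 0 (Set.Ioi 0)) (nhds (ri 0 / rj 0)) := by
    have hbase : Filter.Tendsto (fun ε => ri ε / rj ε)
        (nhdsWithin 0 (Set.Ioi 0)) (nhds (ri 0 / rj 0)) :=
      (((hri_c.tendsto 0).div (hrj_c.tendsto 0) hrj0ne).mono_left nhdsWithin_le_nhds)
    refine hbase.congr' ?_
    filter_upwards [self_mem_nhdsWithin] with ε hε
    exact (hratio ε hε).symm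
  have ht2 : Filter.Tendsto (fun ε => G.priceRatio i j (B ε))
      (nhdsWithin 0 (Set.Ioi 0)) (nhds (ri' 0 / rj' 0)) := by
    have hbase : Filter.Tendsto (fun ε => ri' ε / rj' ε)
        (nhdsWithin 0 (Set.Ioi 0)) (nhds (ri' 0 / rj' 0)) :=
      (((hri'_c.tendsto 0).div (hrj'_c.tendsto 0) hrj'0ne).mono_left nhdsWithin_le_nhds)
    refine hbase.congr' ?_
    filter_upwards [self_mem_nhdsWithin] with ε hε
    exact ((heqr ε hε).trans (hratio' ε hε)).symm
  have hlim : ri 0 / rj 0 = ri' 0 / rj' 0 := tendsto_nhds_unique ht1 ht2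
  rw [hri0, hrj0, hri'0, hrj'0, mul_div_mul_left _ _ hNne,
    mul_div_mul_left _ _ hNne] at hlim
  exact hne hlim

end Aux

/-- a connected subgraph has no larger price complexity. -/
theorem stmt9 {n : ℕ} (G G' : Money.Digraph n) (hc : G.Connected)
    (hc' : G'.Connected) (hsub : G'.IsSubgraph G) :
    G'.priceComplexity ≤ G.priceComplexity := by
  classical
  apply Finset.sup_le
  intro p hp
  obtain ⟨hp1, hp2⟩ := Finset.mem_filter.mp hp
  obtain ⟨h1, h2⟩ := Finset.mem_product.mp hp1
  have hpair : G'.priceCplxPair p.1 p.2 ≤ G.priceCplxPair p.1 p.2 := by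
    apply Finset.card_le_card
    intro e he
    obtain ⟨heE, heI⟩ := Finset.mem_filter.mp he
    exact Finset.mem_filter.mpr
      ⟨hsub.2 heE, influential_mono hc hc' hsub h1 h2 heE heI⟩
  refine hpair.trans ?_
  unfold Money.Digraph.priceComplexity
  apply Finset.le_sup (b := p)
  rw [Finset.mem_filter, Finset.mem_product]
  exact ⟨⟨hsub.1 h1, hsub.1 h2⟩, hp2⟩
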